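/- Let x̄ be a strongly stable fractional matching. Define μ_x̄(f) to be the set of the (at most) q_f most preferred workers w of firm f with x̄_{f,w} > 0. Then μ_x̄ is a well-defined matching: no worker belongs to μ_x̄(f) for two distinct firms f. -/

import Mathlib

open Finset
open scoped Classical

/-- A many-to-one matching market: firms `F`, workers `W`, quotas `q`,
strict preference relations of firms over individual workers and of workers
over firms, and acceptability predicates. -/
structure Market (F W : Type*) where
  q : F → ℕ
  qpos : ∀ f, 1 ≤ q f
  prefF : F → W → W → Prop
  prefW : W → F → F → Prop
  accF : F → W → Prop
  accW : W → F → Prop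
  prefF_trans : ∀ f, Transitive (prefF f)
  prefF_irrefl : ∀ f w, ¬ prefF f w w
  prefF_total : ∀ f j w, j ≠ w → prefF f j w ∨ prefF f w j
  prefW_trans : ∀ w, Transitive (prefW w)
  prefW_irrefl : ∀ w f, ¬ prefW w f f
  prefW_total : ∀ w i f, i ≠ f → prefW w i f ∨ prefW w f i

namespace Market

variable {F W : Type*} [Fintype F] [Fintype W] (M : Market F W)

def acceptable (f : F) (w : W) : Prop := M.accF f w ∧ M.accW w f

def weakF (f : F) (j w : W) : Prop := M.prefF f j w ∨ j = w

def weakW (w : W) (i f : F) : Prop := M.prefW w i f ∨ i = f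

noncomputable def rowSumAbove (x : F → W → ℝ) (f : F) (w : W) : ℝ :=
  ∑ j ∈ univ.filter (fun j => M.weakF f j w), x f j

noncomputable def rowSumStrict (x : F → W → ℝ) (f : F) (w : W) : ℝ :=
  ∑ j ∈ univ.filter (fun j => M.prefF f j w), x f j

noncomputable def colSumAbove (x : F → W → ℝ) (w : W) (f : F) : ℝ :=
  ∑ i ∈ univ.filter (fun i => M.weakW w i f), x i w

noncomputable def colSumStrict (x : F → W → ℝ) (w : W) (f : F) : ℝ :=
  ∑ i ∈ univ.filter (fun i => M.prefW w i f), x i w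

/-- The SCP linear system: nonnegativity, firm capacity, worker capacity,
zero on unacceptable pairs, and the stability inequality on acceptable pairs. -/
def SCP (x : F → W → ℝ) : Prop :=
  (∀ f w, 0 ≤ x f w) ∧
  (∀ f, ∑ j, x f j ≤ (M.q f : ℝ)) ∧
  (∀ w, ∑ i, x i w ≤ 1) ∧
  (∀ f w, ¬ M.acceptable f w → x f w = 0) ∧
  (∀ f w, M.acceptable f w →
    (M.q f : ℝ) ≤
      M.rowSumStrict x f w + (M.q f : ℝ) * M.colSumStrict x w f + (M.q f : ℝ) * x f w)

/-- The strong stability condition at a pair `(f, w)`. -/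
def StrongCondAt (x : F → W → ℝ) (f : F) (w : W) : Prop :=
  ((M.q f : ℝ) - M.rowSumAbove x f w) * (1 - M.colSumAbove x w f) = 0

/-- A strongly stable fractional matching. -/
def StronglyStable (x : F → W → ℝ) : Prop :=
  M.SCP x ∧ ∀ f w, M.acceptable f w → M.StrongCondAt x f w

def isMatching (μ : F → Finset W) : Prop :=
  (∀ f, (μ f).card ≤ M.q f) ∧ ∀ w f f', w ∈ μ f → w ∈ μ f' → f = f'

def indivRational (μ : F → Finset W) : Prop := ∀ f w, w ∈ μ f → M.acceptable f w

def blocks (μ : F → Finset W) (f : F) (w : W) : Prop :=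
  w ∉ μ f ∧ M.acceptable f w ∧ (∀ f', w ∈ μ f' → M.prefW w f f') ∧
    ((μ f).card < M.q f ∨ ∃ w' ∈ μ f, M.prefF f w w')

def isStable (μ : F → Finset W) : Prop :=
  M.isMatching μ ∧ M.indivRational μ ∧ ∀ f w, ¬ M.blocks μ f w

noncomputable def incidence (_m : Market F W) (μ : F → Finset W) : F → W → ℝ :=
  fun f w => if w ∈ μ f then 1 else 0

def firmWeakDom (x y : F → W → ℝ) (f : F) : Prop :=
  ∀ w, M.rowSumAbove y f w ≤ M.rowSumAbove x f w

/-- All firms weakly prefer `x` to `y`, at least one strictly. -/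
def firmsPrefer (x y : F → W → ℝ) : Prop :=
  (∀ f, M.firmWeakDom x y f) ∧ ∃ f w, M.rowSumAbove y f w < M.rowSumAbove x f w

end Market

namespace Market

variable {F W : Type*} [Fintype F] [Fintype W] (M : Market F W)

noncomputable def supportRow (_m : Market F W) (x : F → W → ℝ) (f : F) : Finset W :=
  univ.filter (fun w => 0 < x f w)

/-- `μ_x(f)`: the `q f` most preferred workers of `f` among those with `x f w > 0`. -/
noncomputable def muX (x : F → W → ℝ) (f : F) : Finset W :=
  (M.supportRow x f).filter
    (fun w => ((M.supportRow x f).filter (fun w' => M.prefF f w' w)).card < M.q f)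

end Market

private lemma colAbove_eq_one {F W : Type*} [Fintype F] [Fintype W]
    (M : Market F W) (x : F → W → ℝ) (hx : M.StronglyStable x)
    (w : W) (f : F) (h : w ∈ M.muX x f) (hlt : x f w < 1) :
    M.colSumAbove x w f = 1 := by
  obtain ⟨⟨hnn, hrow, hcol, hzero, hscp⟩, hstrong⟩ := hx
  rw [Market.muX, Finset.mem_filter] at h
  obtain ⟨hsupp, hcard⟩ := h
  rw [Market.supportRow, Finset.mem_filter] at hsupp
  have hxpos : 0 < x f w := hsupp.2
  have hacc : M.acceptable f w := by
    by_contra hna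
    exact absurd (hzero f w hna) (ne_of_gt hxpos)
  have hone : ∀ g j, x g j ≤ 1 := fun g j =>
    le_trans (Finset.single_le_sum (fun i _ => hnn i j) (Finset.mem_univ g)) (hcol j)
  -- rowSumStrict bound
  set S : Finset W := (M.supportRow x f).filter (fun j => M.prefF f j w) with hS
  have hsum_eq : M.rowSumStrict x f w = ∑ j ∈ S, x f j := by
    rw [Market.rowSumStrict]
    rw [← Finset.sum_filter_of_ne (p := fun j => 0 < x f j)
      (fun j _ hne => lt_of_le_of_ne (hnn f j) (Ne.symm hne))]
    congr 1
    rw [hS, Market.supportRow, Finset.filter_filter, Finset.filter_filter]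
    simp [and_comm]
  have hstrict_le : M.rowSumStrict x f w ≤ (S.card : ℝ) := by
    rw [hsum_eq]
    calc ∑ j ∈ S, x f j ≤ ∑ _j ∈ S, (1 : ℝ) :=
          Finset.sum_le_sum (fun j _ => hone f j)
      _ = (S.card : ℝ) := by simp
  have hcardle : (S.card : ℝ) + 1 ≤ (M.q f : ℝ) := by
    have : S.card + 1 ≤ M.q f := hcard
    exact_mod_cast this
  -- rowSumAbove decomposition
  have hset : Finset.univ.filter (fun j => M.weakF f j w)
      = insert w (Finset.univ.filter (fun j => M.prefF f j w)) := by
    ext j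
    simp only [Finset.mem_filter, Finset.mem_univ, true_and, Finset.mem_insert]
    simp only [Market.weakF]
    tauto
  have hwnot : w ∉ Finset.univ.filter (fun j => M.prefF f j w) := by
    simp [M.prefF_irrefl f w]
  have habove : M.rowSumAbove x f w = x f w + M.rowSumStrict x f w := by
    rw [Market.rowSumAbove, hset, Finset.sum_insert hwnot, Market.rowSumStrict]
  have hrlt : M.rowSumAbove x f w < (M.q f : ℝ) := by
    rw [habove]; linarith
  have hsc := hstrong f w hacc
  rw [Market.StrongCondAt] at hsc
  rcases mul_eq_zero.mp hsc with h1 | h2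
  · linarith
  · linarith

private lemma zero_of_not_weak {F W : Type*} [Fintype F] [Fintype W]
    (M : Market F W) (x : F → W → ℝ) (hx : M.StronglyStable x)
    (w : W) (f g : F) (hcol1 : M.colSumAbove x w f = 1)
    (hnw : ¬ M.weakW w g f) : x g w = 0 := by
  obtain ⟨⟨hnn, _, hcol, _, _⟩, _⟩ := hx
  have hsplit := Finset.sum_filter_add_sum_filter_not Finset.univ
    (fun i => M.weakW w i f) (fun i => x i w)
  have hcolw := hcol w
  rw [Market.colSumAbove] at hcol1
  have hle : ∑ i ∈ Finset.univ.filter (fun i => ¬ M.weakW w i f), x i w ≤ 0 := by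
    linarith
  have hge : x g w ≤ ∑ i ∈ Finset.univ.filter (fun i => ¬ M.weakW w i f), x i w := by
    apply Finset.single_le_sum (fun i _ => hnn i w)
    simp [hnw]
  have := hnn g w
  linarith

/-- For a strongly stable fractional matching `x`, the assignment `μ_x` is
well defined: no worker is assigned to two distinct firms. -/
theorem muX_well_defined {F W : Type*} [Fintype F] [Fintype W]
    (M : Market F W) (x : F → W → ℝ) (hx : M.StronglyStable x)
    (w : W) (f f' : F) (h : w ∈ M.muX x f) (h' : w ∈ M.muX x f') :
    f = f' := by
  by_contra hne
  have hxcopy := hx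
  obtain ⟨⟨hnn, hrow, hcol, hzero, hscp⟩, hstrong⟩ := hxcopy
  have hxf : 0 < x f w := by
    have := (Finset.mem_filter.mp h).1
    rw [Market.supportRow, Finset.mem_filter] at this
    exact this.2
  have hxf' : 0 < x f' w := by
    have := (Finset.mem_filter.mp h').1
    rw [Market.supportRow, Finset.mem_filter] at this
    exact this.2
  have hpair : x f w + x f' w ≤ 1 := by
    have hsub : ({f, f'} : Finset F) ⊆ Finset.univ := Finset.subset_univ _
    have := Finset.sum_le_sum_of_subset_of_nonneg hsub
      (fun i _ _ => hnn i w)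
    rw [Finset.sum_pair hne] at this
    exact le_trans this (hcol w)
  have hltf : x f w < 1 := by linarith
  have hltf' : x f' w < 1 := by linarith
  have hc1 := colAbove_eq_one M x hx w f h hltf
  have hc1' := colAbove_eq_one M x hx w f' h' hltf'
  rcases M.prefW_total w f f' hne with hp | hp
  · -- f ≻_w f', so ¬ weakW w f' f, hence x f' w = 0
    have hnw : ¬ M.weakW w f' f := by
      rintro (hpf | rfl)
      · exact M.prefW_irrefl w f (M.prefW_trans w hp hpf)
      · exact hne rfl
    have := zero_of_not_weak M x hx w f f' hc1 hnw
    linarith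
  · have hnw : ¬ M.weakW w f f' := by
      rintro (hpf | rfl)
      · exact M.prefW_irrefl w f (M.prefW_trans w hpf hp)
      · exact hne rfl
    have := zero_of_not_weak M x hx w f' f hc1' hnw
    linarith
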